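/- Let φ: D → D be measurable and suppose the linear map f ↦ f∘φ is bounded from L^3_a(D) to L^3(D). Then for every bounded measurable f on D, the function I_φ f(z) = ∫_D f(w)/(1 - z·conj(φ(w)))^2 dA(w) is holomorphic on D and lies in the Bloch space, with ‖I_φ f‖_β ≤ C‖f‖_∞ for a constant C depending only on the norm of C_φ: L^3_a → L^3. -/

import Mathlib

open Complex Set MeasureTheory
open scoped ENNReal NNReal

noncomputable def bc : ℕ → ℝ
  | 0 => 1
  | n+1 => bc n * (n + 3/2) / (n+1)

lemma bc_pos : ∀ n, 0 < bc n
  | 0 => one_pos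
  | n+1 => by
    have := bc_pos n
    simp only [bc]
    positivity

lemma bc_rec (n : ℕ) : ((n:ℝ)+1) * bc (n+1) = ((n:ℝ) + 3/2) * bc n := by
  simp only [bc]
  field_simp

lemma bc_sq_le (n : ℕ) : bc n ^ 2 ≤ 2*n+1 := by
  induction n with
  | zero => simp [bc]
  | succ n ih =>
    have hb := bc_pos n
    have h1 : bc (n+1) = bc n * ((n:ℝ) + 3/2) / ((n:ℝ)+1) := by simp [bc]
    have hn1 : (0:ℝ) < (n:ℝ)+1 := by positivity
    rw [h1, div_pow, div_le_iff₀ (by positivity), mul_pow]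
    have key : bc n ^2 * ((n:ℝ)+3/2)^2 ≤ (2*n+1) * ((n:ℝ)+3/2)^2 :=
      mul_le_mul_of_nonneg_right ih (by positivity)
    refine key.trans ?_
    push_cast
    nlinarith [sq_nonneg ((n:ℝ))]

lemma bc_le (n : ℕ) : bc n ≤ (n:ℝ)+1 := by
  have h := bc_sq_le n
  have hb := (bc_pos n).le
  nlinarith [sq_nonneg (bc n - ((n:ℝ)+1))]

noncomputable def sconv (n : ℕ) : ℝ := ∑ p ∈ Finset.HasAntidiagonal.antidiagonal n, bc p.1 * bc p.2

lemma two_t (n : ℕ) :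
    2 * (∑ p ∈ Finset.HasAntidiagonal.antidiagonal n, (p.1:ℝ) * (bc p.1 * bc p.2)) = n * sconv n := by
  have hswap : ∑ p ∈ Finset.HasAntidiagonal.antidiagonal n, (p.1:ℝ) * (bc p.1 * bc p.2)
      = ∑ p ∈ Finset.HasAntidiagonal.antidiagonal n, (p.2:ℝ) * (bc p.1 * bc p.2) := by
    rw [← Finset.Nat.sum_antidiagonal_swap (f := fun p => (p.1:ℝ) * (bc p.1 * bc p.2))]
    exact Finset.sum_congr rfl fun p _ => by simp [Prod.swap, mul_comm (bc p.2) (bc p.1)]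
  rw [two_mul]
  nth_rewrite 2 [hswap]
  rw [← Finset.sum_add_distrib, sconv, Finset.mul_sum]
  refine Finset.sum_congr rfl fun p hp => ?_
  have := Finset.HasAntidiagonal.mem_antidiagonal.mp hp
  have : (p.1:ℝ) + p.2 = n := by exact_mod_cast congrArg (Nat.cast : ℕ → ℝ) this
  rw [← add_mul, this]

lemma sconv_rec (n : ℕ) : ((n:ℝ)+1) * sconv (n+1) = ((n:ℝ)+3) * sconv n := by
  have h1 : ((n:ℝ)+1) * sconv (n+1)
      = 2 * ∑ p ∈ Finset.HasAntidiagonal.antidiagonal (n+1), (p.1:ℝ) * (bc p.1 * bc p.2) := by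
    rw [two_t]; push_cast; ring
  have h2 : ∑ p ∈ Finset.HasAntidiagonal.antidiagonal (n+1), (p.1:ℝ) * (bc p.1 * bc p.2)
      = ∑ p ∈ Finset.HasAntidiagonal.antidiagonal n, ((p.1:ℝ) + 3/2) * (bc p.1 * bc p.2) := by
    rw [Finset.Nat.sum_antidiagonal_succ
      (f := fun p : ℕ × ℕ => (p.1:ℝ) * (bc p.1 * bc p.2))]
    simp only [Nat.cast_zero, zero_mul, zero_add]
    refine Finset.sum_congr rfl fun p _ => ?_
    have hr := bc_rec p.1
    push_cast
    linear_combination bc p.2 * hr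
  have h3 : ∑ p ∈ Finset.HasAntidiagonal.antidiagonal n, ((p.1:ℝ) + 3/2) * (bc p.1 * bc p.2)
      = (∑ p ∈ Finset.HasAntidiagonal.antidiagonal n, (p.1:ℝ) * (bc p.1 * bc p.2)) + (3/2) * sconv n := by
    rw [sconv, Finset.mul_sum, ← Finset.sum_add_distrib]
    exact Finset.sum_congr rfl fun p _ => by ring
  have h4 := two_t n
  rw [h1, h2, h3]
  linarith [h4]

lemma sconv_eq (n : ℕ) : sconv n = ((n:ℝ)+1) * ((n:ℝ)+2) / 2 := by
  induction n with
  | zero => norm_num [sconv, bc]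
  | succ n ih =>
    have h := sconv_rec n
    have hn : ((n:ℝ)+1) ≠ 0 := by positivity
    rw [ih] at h
    field_simp at h ⊢
    push_cast
    nlinarith [h]


lemma summable_np1_geo {x : ℝ} (hx : 0 ≤ x) (hx1 : x < 1) :
    Summable (fun n : ℕ => ((n:ℝ)+1) * x^n) := by
  have h1 : Summable (fun n : ℕ => (n:ℝ)^1 * x^n) :=
    summable_pow_mul_geometric_of_norm_lt_one 1 (by rwa [Real.norm_eq_abs, _root_.abs_of_nonneg hx])
  have h2 : Summable (fun n : ℕ => x^n) := summable_geometric_of_lt_one hx hx1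
  simpa [add_mul, pow_one] using h1.add h2

lemma summable_bc_norm {u : ℂ} (hu : ‖u‖ < 1) :
    Summable (fun n : ℕ => ‖(bc n : ℂ) * u^n‖) := by
  refine Summable.of_nonneg_of_le (fun n => norm_nonneg _) (fun n => ?_)
    (summable_np1_geo (norm_nonneg u) hu)
  rw [norm_mul, norm_pow, Complex.norm_real, Real.norm_eq_abs, abs_of_pos (bc_pos n)]
  exact mul_le_mul_of_nonneg_right (bc_le n) (by positivity)

lemma summable_geo_norm {u : ℂ} (hu : ‖u‖ < 1) :
    Summable (fun n : ℕ => ‖u^n‖) := by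
  simpa [norm_pow] using summable_geometric_of_lt_one (norm_nonneg u) hu

lemma summable_np1_norm {u : ℂ} (hu : ‖u‖ < 1) :
    Summable (fun n : ℕ => ‖((n:ℂ)+1) * u^n‖) := by
  refine Summable.of_nonneg_of_le (fun n => norm_nonneg _) (fun n => ?_)
    (summable_np1_geo (norm_nonneg u) hu)
  rw [norm_mul, norm_pow]
  gcongr
  calc ‖(n:ℂ)+1‖ ≤ ‖(n:ℂ)‖ + ‖(1:ℂ)‖ := norm_add_le _ _
    _ = (n:ℝ)+1 := by simp

noncomputable def Hfun (u : ℂ) : ℂ := ∑' n : ℕ, (bc n : ℂ) * u^n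

lemma H_sq {u : ℂ} (hu : ‖u‖ < 1) : (Hfun u)^2 * (1-u)^3 = 1 := by
  have h1u : (1:ℂ) - u ≠ 0 := by
    intro h
    rw [sub_eq_zero] at h
    rw [← h] at hu; simp at hu
  have hg := summable_geo_norm hu
  have A : ∑' n : ℕ, u^n = (1-u)⁻¹ := tsum_geometric_of_norm_lt_one hu
  have e2 : (1-u)⁻¹ * (1-u)⁻¹ = ∑' n : ℕ, ((n:ℂ)+1) * u^n := by
    rw [← A, tsum_mul_tsum_eq_tsum_sum_antidiagonal_of_summable_norm hg hg]
    refine tsum_congr fun n => ?_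
    have hterm : ∀ p ∈ Finset.HasAntidiagonal.antidiagonal n, u ^ p.1 * u ^ p.2 = u ^ n := fun p hp => by
      rw [← pow_add, Finset.HasAntidiagonal.mem_antidiagonal.mp hp]
    rw [Finset.sum_congr rfl hterm, Finset.sum_const, Finset.Nat.card_antidiagonal, nsmul_eq_mul]
    push_cast
    ring
  have e3 : ((1-u)⁻¹ * (1-u)⁻¹) * (1-u)⁻¹
      = ∑' n : ℕ, ((((n:ℝ)+1) * ((n:ℝ)+2) / 2 : ℝ) : ℂ) * u^n := by
    rw [e2, ← A, tsum_mul_tsum_eq_tsum_sum_antidiagonal_of_summable_norm (summable_np1_norm hu) hg]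
    refine tsum_congr fun n => ?_
    have key : ∀ p ∈ Finset.HasAntidiagonal.antidiagonal n,
        ((p.1:ℂ)+1) * u^p.1 * u^p.2 = ((p.1:ℂ)+1) * u^n := fun p hp => by
      rw [mul_assoc, ← pow_add, Finset.HasAntidiagonal.mem_antidiagonal.mp hp]
    rw [Finset.sum_congr rfl key, ← Finset.sum_mul]
    congr 1
    have : ∑ p ∈ Finset.HasAntidiagonal.antidiagonal n, ((p.1:ℂ)+1)
        = (((∑ p ∈ Finset.HasAntidiagonal.antidiagonal n, ((p.1:ℝ)+1)) : ℝ) : ℂ) := by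
      push_cast; rfl
    rw [this]
    congr 1
    -- real sum: ∑ (p.1+1) = (n+1)(n+2)/2
    have hsym : ∑ p ∈ Finset.HasAntidiagonal.antidiagonal n, (p.1:ℝ)
        = ∑ p ∈ Finset.HasAntidiagonal.antidiagonal n, (p.2:ℝ) := by
      rw [← Finset.Nat.sum_antidiagonal_swap (f := fun p : ℕ × ℕ => (p.1:ℝ))]
      simp
    have h2t : 2 * ∑ p ∈ Finset.HasAntidiagonal.antidiagonal n, (p.1:ℝ) = n * (n+1) := by
      rw [two_mul]
      nth_rewrite 2 [hsym]
      rw [← Finset.sum_add_distrib]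
      rw [Finset.sum_congr rfl (fun p hp => ?_), Finset.sum_const,
        Finset.Nat.card_antidiagonal, nsmul_eq_mul]
      · push_cast; ring
      · have := Finset.HasAntidiagonal.mem_antidiagonal.mp hp
        exact_mod_cast congrArg (Nat.cast : ℕ → ℝ) this
    have hc : ∑ p ∈ Finset.HasAntidiagonal.antidiagonal n, ((p.1:ℝ)+1)
        = (∑ p ∈ Finset.HasAntidiagonal.antidiagonal n, (p.1:ℝ)) + (n+1) := by
      rw [Finset.sum_add_distrib, Finset.sum_const, Finset.Nat.card_antidiagonal,
        nsmul_eq_mul, mul_one]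
      push_cast; ring
    rw [hc]
    linarith [h2t]
  have e4 : Hfun u * Hfun u = ∑' n : ℕ, ((sconv n : ℝ) : ℂ) * u^n := by
    rw [Hfun, tsum_mul_tsum_eq_tsum_sum_antidiagonal_of_summable_norm
      (summable_bc_norm hu) (summable_bc_norm hu)]
    refine tsum_congr fun n => ?_
    have key : ∀ p ∈ Finset.HasAntidiagonal.antidiagonal n,
        (bc p.1 : ℂ) * u^p.1 * ((bc p.2 : ℂ) * u^p.2)
          = ((bc p.1 * bc p.2 : ℝ) : ℂ) * u^n := fun p hp => by
      push_cast
      rw [show (bc p.1 : ℂ) * u^p.1 * ((bc p.2:ℂ) * u^p.2)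
        = (bc p.1:ℂ) * (bc p.2:ℂ) * (u^p.1 * u^p.2) by ring, ← pow_add,
        Finset.HasAntidiagonal.mem_antidiagonal.mp hp]
    rw [Finset.sum_congr rfl key, ← Finset.sum_mul]
    congr 1
    rw [sconv]
    push_cast
    rfl
  have e5 : Hfun u * Hfun u = ((1-u)⁻¹ * (1-u)⁻¹) * (1-u)⁻¹ := by
    rw [e4, e3]
    refine tsum_congr fun n => ?_
    rw [sconv_eq]
  have : (Hfun u)^2 * (1-u)^3 = (Hfun u * Hfun u) * (1-u)^3 := by ring
  rw [this, e5]
  field_simp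

lemma H_norm {u : ℂ} (hu : ‖u‖ < 1) : ‖(1:ℂ)-u‖⁻¹ ^ 3 = ‖Hfun u‖^2 := by
  have h := congrArg norm (H_sq hu)
  rw [norm_mul, norm_pow, norm_pow, norm_one] at h
  have h1u : ‖(1:ℂ) - u‖ ≠ 0 := by
    intro h0
    rw [norm_eq_zero, sub_eq_zero] at h0
    rw [← h0] at hu; simp at hu
  rw [inv_pow, eq_comm]
  exact eq_inv_of_mul_eq_one_left h

def unitDisk : Set ℂ := Metric.ball 0 1

/-- Normalized Lebesgue area measure on the plane (the unit disk has measure 1). -/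
noncomputable def nVol : Measure ℂ := (ENNReal.ofReal Real.pi)⁻¹ • volume

/-- The twisted Bergman-type projection `I_φ f(z) = ∫_D f(w)/(1 - z·conj(φ(w)))² dA(w)`. -/
noncomputable def Iphi (φ f : ℂ → ℂ) (z : ℂ) : ℂ :=
  ∫ w in unitDisk, f w / (1 - z * (starRingEnd ℂ) (φ w)) ^ 2 ∂nVol

lemma mem_unitDisk {w : ℂ} : w ∈ unitDisk ↔ ‖w‖ < 1 := by
  simp [unitDisk, Metric.mem_ball, dist_zero_right]

lemma integral_monomial_volume (n m : ℕ) :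
    ∫ w in unitDisk, w^n * (starRingEnd ℂ) w^m ∂(volume : Measure ℂ)
      = if n = m then ((Real.pi / (n+1) : ℝ) : ℂ) else 0 := by
  classical
  set f : ℂ → ℂ := Set.indicator unitDisk (fun w => w^n * (starRingEnd ℂ) w^m) with hf
  have h0 : ∫ w in unitDisk, w^n * (starRingEnd ℂ) w^m ∂(volume : Measure ℂ)
      = ∫ w, f w ∂volume := by
    rw [hf, integral_indicator (by exact measurableSet_ball)]
  rw [h0, ← Complex.integral_comp_polarCoord_symm f]
  have htarget : polarCoord.target = Set.Ioi (0:ℝ) ×ˢ Set.Ioo (-Real.pi) Real.pi := rfl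
  set Frad : ℝ → ℂ := Set.indicator (Set.Ioo (0:ℝ) 1) (fun r : ℝ => (r:ℂ)^(n+m+1)) with hFrad
  set Gang : ℝ → ℂ := fun θ : ℝ => Complex.exp (((n:ℂ) - m) * Complex.I * θ) with hGang
  have hcongr : ∀ p ∈ polarCoord.target,
      p.1 • f (Complex.polarCoord.symm p) = Frad p.1 * Gang p.2 := by
    rintro ⟨r, θ⟩ hp
    rw [htarget] at hp
    obtain ⟨hr, hθ⟩ := hp
    have hr0 : (0:ℝ) < r := hr
    have hsymm : Complex.polarCoord.symm (r, θ) = (r:ℂ) * Complex.exp (θ * Complex.I) := by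
      rw [Complex.polarCoord_symm_apply, Complex.exp_mul_I]
      push_cast
      ring
    have hnorm : ‖Complex.polarCoord.symm (r, θ)‖ = r := by
      rw [hsymm, norm_mul]
      have : ‖Complex.exp ((θ:ℂ) * Complex.I)‖ = 1 := Complex.norm_exp_ofReal_mul_I θ
      rw [this, mul_one, Complex.norm_real, Real.norm_eq_abs, _root_.abs_of_pos hr0]
    by_cases h1 : r < 1
    · have hmem : Complex.polarCoord.symm (r, θ) ∈ unitDisk := by
        rw [mem_unitDisk, hnorm]; exact h1
      rw [hf, Set.indicator_of_mem hmem, hFrad,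
        Set.indicator_of_mem (Set.mem_Ioo.mpr ⟨hr0, h1⟩)]
      simp only
      rw [hsymm]
      have hconj : (starRingEnd ℂ) ((r:ℂ) * Complex.exp ((θ:ℂ) * Complex.I))
          = (r:ℂ) * Complex.exp (-((θ:ℂ) * Complex.I)) := by
        rw [map_mul, Complex.conj_ofReal, ← Complex.exp_conj, map_mul, Complex.conj_ofReal,
          Complex.conj_I, mul_neg]
      rw [hconj, mul_pow, mul_pow, ← Complex.exp_nat_mul, ← Complex.exp_nat_mul]
      rw [show ((r:ℂ))^n * Complex.exp ((n:ℂ) * ((θ:ℂ) * Complex.I))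
            * ((r:ℂ)^m * Complex.exp ((m:ℂ) * -((θ:ℂ) * Complex.I)))
          = (r:ℂ)^n * (r:ℂ)^m * (Complex.exp ((n:ℂ) * ((θ:ℂ) * Complex.I))
            * Complex.exp ((m:ℂ) * -((θ:ℂ) * Complex.I))) by ring,
        ← Complex.exp_add]
      rw [show ((n:ℂ) * ((θ:ℂ) * Complex.I) + (m:ℂ) * -((θ:ℂ) * Complex.I))
          = ((n:ℂ) - m) * Complex.I * θ by ring]
      rw [Complex.real_smul]
      push_cast
      ring
    · have hmem : Complex.polarCoord.symm (r, θ) ∉ unitDisk := by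
        rw [mem_unitDisk, hnorm]; exact fun h => h1 h
      rw [hf, Set.indicator_of_notMem hmem, hFrad,
        Set.indicator_of_notMem (by simp [Set.mem_Ioo]; intro h; linarith)]
      simp
  rw [setIntegral_congr_fun (by rw [htarget]; exact measurableSet_Ioi.prod measurableSet_Ioo)
    hcongr, htarget, MeasureTheory.Measure.volume_eq_prod, setIntegral_prod_mul]
  have hrad : (∫ r in Set.Ioi (0:ℝ), Frad r) = ((1 / (n+m+2) : ℝ) : ℂ) := by
    rw [hFrad, setIntegral_indicator measurableSet_Ioo,
      show Set.Ioi (0:ℝ) ∩ Set.Ioo 0 1 = Set.Ioo 0 1 from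
        Set.inter_eq_self_of_subset_right Set.Ioo_subset_Ioi_self]
    have hcast : ∀ r : ℝ, (r:ℂ)^(n+m+1) = ((r^(n+m+1) : ℝ) : ℂ) := fun r => by push_cast; ring
    simp_rw [hcast]
    have hreal : ∫ x in Set.Ioo (0:ℝ) 1, x^(n+m+1) = 1/((n:ℝ)+m+2) := by
      rw [← integral_Ioc_eq_integral_Ioo,
        ← intervalIntegral.integral_of_le (by norm_num : (0:ℝ) ≤ 1), integral_pow]
      push_cast
      norm_num
      ring
    calc ∫ x in Set.Ioo (0:ℝ) 1, ((x^(n+m+1) : ℝ) : ℂ)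
        = ((∫ x in Set.Ioo (0:ℝ) 1, x^(n+m+1) : ℝ) : ℂ) := integral_ofReal
      _ = ((1 / ((n:ℝ) + m + 2) : ℝ) : ℂ) := by rw [hreal]
      _ = ((1 / ((n:ℕ) + (m:ℕ) + 2 : ℝ) : ℝ) : ℂ) := by push_cast; ring
  have hang : (∫ θ in Set.Ioo (-Real.pi) Real.pi, Gang θ)
      = if n = m then ((2*Real.pi : ℝ) : ℂ) else 0 := by
    by_cases hnm : n = m
    · subst hnm
      rw [if_pos rfl]
      have : Gang = fun _ : ℝ => (1:ℂ) := by
        funext θ; rw [hGang]; simp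
      rw [this, setIntegral_const, Measure.real, Real.volume_Ioo]
      rw [ENNReal.toReal_ofReal (by linarith [Real.pi_pos])]
      push_cast
      simp [Complex.real_smul]
      ring
    · rw [if_neg hnm]
      have hc : ((n:ℂ) - m) * Complex.I ≠ 0 := by
        refine mul_ne_zero (sub_ne_zero.mpr ?_) Complex.I_ne_zero
        exact_mod_cast hnm
      rw [← integral_Ioc_eq_integral_Ioo,
        ← intervalIntegral.integral_of_le (by linarith [Real.pi_pos] : -Real.pi ≤ Real.pi)]
      rw [hGang]
      simp only
      rw [integral_exp_mul_complex hc]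
      have hcast : ((n:ℂ) - m) = (((n:ℤ) - m : ℤ):ℂ) := by push_cast; ring
      set k : ℤ := (n:ℤ) - m with hk
      have e1 : ((n:ℂ) - m) * Complex.I * (Real.pi:ℂ) = (k:ℂ) * ((Real.pi:ℂ) * Complex.I) := by
        rw [hcast]; ring
      have e2 : ((n:ℂ) - m) * Complex.I * ((-Real.pi:ℝ):ℂ) = (-k:ℂ) * ((Real.pi:ℂ) * Complex.I) := by
        rw [hcast]; push_cast; ring
      rw [e1, e2]
      rw [show ((-k:ℂ)) = ((-k : ℤ) : ℂ) by push_cast; ring]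
      rw [Complex.exp_int_mul, Complex.exp_int_mul, Complex.exp_pi_mul_I]
      have hpow : ((-1:ℂ)^k)⁻¹ = (-1:ℂ)^k := by
        rw [← inv_zpow]; norm_num
      rw [zpow_neg, hpow, sub_self, zero_div]
  rw [hrad, hang]
  by_cases hnm : n = m
  · subst hnm
    rw [if_pos rfl, if_pos rfl, ← Complex.ofReal_mul]
    congr 1
    have h2 : ((n:ℝ) + n + 2) ≠ 0 := by positivity
    have h3 : ((n:ℝ) + 1) ≠ 0 := by positivity
    field_simp
    ring
  · rw [if_neg hnm, if_neg hnm, mul_zero]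

lemma ofReal_pi_ne_zero : ENNReal.ofReal Real.pi ≠ 0 := by
  simp [Real.pi_pos, ENNReal.ofReal_eq_zero, not_le]

lemma nVol_disk : nVol unitDisk = 1 := by
  rw [nVol, Measure.smul_apply, smul_eq_mul, unitDisk, Complex.volume_ball]
  rw [show (ENNReal.ofReal (1:ℝ))^2 * (NNReal.pi : ℝ≥0∞) = ENNReal.ofReal Real.pi by
    rw [ENNReal.ofReal_one, one_pow, one_mul, ← NNReal.coe_real_pi, ENNReal.ofReal_coe_nnreal]]
  exact ENNReal.inv_mul_cancel ofReal_pi_ne_zero (by simp)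

instance : IsFiniteMeasure (nVol.restrict unitDisk) :=
  ⟨by rw [Measure.restrict_apply_univ, nVol_disk]; exact ENNReal.one_lt_top⟩

lemma integral_monomial_nVol (n m : ℕ) :
    ∫ w in unitDisk, w^n * (starRingEnd ℂ) w^m ∂nVol
      = if n = m then ((1 / ((n:ℝ)+1) : ℝ) : ℂ) else 0 := by
  rw [nVol, Measure.restrict_smul, integral_smul_measure, integral_monomial_volume,
    ENNReal.toReal_inv, ENNReal.toReal_ofReal Real.pi_pos.le]
  by_cases h : n = m
  · subst h
    rw [if_pos rfl, if_pos rfl, Complex.real_smul, ← Complex.ofReal_mul]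
    congr 1
    field_simp
  · rw [if_neg h, if_neg h, smul_zero]

lemma summable_bcr {x : ℝ} (h0 : 0 ≤ x) (h1 : x < 1) :
    Summable (fun n : ℕ => bc n * x^n) := by
  refine Summable.of_nonneg_of_le
    (fun n => mul_nonneg (bc_pos n).le (by positivity)) (fun n => ?_) (summable_np1_geo h0 h1)
  exact mul_le_mul_of_nonneg_right (bc_le n) (by positivity)

set_option maxHeartbeats 1000000 in
lemma bergman {z : ℂ} (hz : ‖z‖ < 1) :
    (∫ w in unitDisk, ‖(1:ℂ) - (starRingEnd ℂ) z * w‖⁻¹ ^ 3 ∂nVol) ≤ 2 / (1 - ‖z‖^2) := by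
  classical
  set r := ‖z‖ with hr
  have hr0 : 0 ≤ r := norm_nonneg z
  have hzb : ‖(starRingEnd ℂ) z‖ = r := RCLike.norm_conj z
  set a : ℕ → ℂ := fun n => (bc n : ℂ) * ((starRingEnd ℂ) z)^n with ha
  have hanorm : ∀ n, ‖a n‖ = bc n * r^n := fun n => by
    rw [ha]
    simp only [norm_mul, norm_pow, Complex.norm_real, Real.norm_eq_abs,
      _root_.abs_of_pos (bc_pos n), hzb]
  set term : ℕ × ℕ → ℂ → ℂ :=
    fun p w => (a p.1 * w^p.1) * (starRingEnd ℂ) (a p.2 * w^p.2) with hterm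
  set g : ℂ → ℝ := fun w => ‖(1:ℂ) - (starRingEnd ℂ) z * w‖⁻¹ ^ 3 with hg
  -- summability of a-coefficients
  have hsuma : Summable (fun n : ℕ => ‖a n‖) := by
    simp only [hanorm]
    exact summable_bcr hr0 hz
  -- pointwise identity on the disk
  have hpt : ∀ w ∈ unitDisk, ∑' p : ℕ × ℕ, term p w = ((g w : ℝ) : ℂ) := by
    intro w hw
    have hw1 : ‖w‖ < 1 := mem_unitDisk.mp hw
    set u : ℂ := (starRingEnd ℂ) z * w with hu
    have hun : ‖u‖ < 1 := by
      rw [hu, norm_mul, hzb]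
      calc r * ‖w‖ ≤ r * 1 := by
            exact mul_le_mul_of_nonneg_left hw1.le hr0
        _ = r := mul_one r
        _ < 1 := hz
    have haw : ∀ n : ℕ, a n * w^n = (bc n : ℂ) * u^n := fun n => by
      rw [ha, hu, mul_pow]; ring
    have hf1 : Summable (fun n : ℕ => ‖a n * w^n‖) := by
      refine Summable.of_nonneg_of_le (fun n => norm_nonneg _) (fun n => ?_) hsuma
      rw [norm_mul, norm_pow]
      exact mul_le_of_le_one_right (norm_nonneg _) (pow_le_one₀ (norm_nonneg w) hw1.le)
    have hf2 : Summable (fun n : ℕ => ‖(starRingEnd ℂ) (a n * w^n)‖) := by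
      simpa only [RCLike.norm_conj] using hf1
    have e1 : ∑' p : ℕ × ℕ, term p w
        = (∑' n : ℕ, a n * w^n) * (∑' n : ℕ, (starRingEnd ℂ) (a n * w^n)) :=
      (tsum_mul_tsum_of_summable_norm hf1 hf2).symm
    have e2 : (∑' n : ℕ, (starRingEnd ℂ) (a n * w^n)) = (starRingEnd ℂ) (∑' n : ℕ, a n * w^n) :=
      (tsum_star).symm
    have e3 : (∑' n : ℕ, a n * w^n) = Hfun u := by
      rw [Hfun]
      exact tsum_congr haw
    rw [e1, e2, e3, Complex.mul_conj]
    have hgw : g w = ‖Hfun u‖^2 := by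
      simp only [hg]
      rw [← hu]
      exact H_norm hun
    rw [hgw, Complex.normSq_eq_norm_sq]
  have hmUD : MeasurableSet unitDisk := by exact measurableSet_ball
  set G : ℕ × ℕ → ℝ := fun p => (bc p.1 * r^p.1) * (bc p.2 * r^p.2) with hG
  have hbr : ∀ n : ℕ, 0 ≤ bc n * r^n := fun n => mul_nonneg (bc_pos n).le (by positivity)
  have hGsum : Summable G := (summable_bcr hr0 hz).mul_of_nonneg (summable_bcr hr0 hz) hbr hbr
  have hGnn : ∀ p, 0 ≤ G p := fun p => mul_nonneg (hbr _) (hbr _)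
  have htermbd : ∀ p : ℕ × ℕ, ∀ w ∈ unitDisk, ‖term p w‖ ≤ G p := by
    intro p w hw
    have hw1 : ‖w‖ ≤ 1 := (mem_unitDisk.mp hw).le
    have hwp : ∀ k : ℕ, ‖w‖^k ≤ 1 := fun k => pow_le_one₀ (norm_nonneg w) hw1
    have key : ∀ k : ℕ, ‖a k‖ * ‖w‖^k ≤ bc k * r^k := fun k => by
      rw [hanorm]
      calc bc k * r^k * ‖w‖^k ≤ bc k * r^k * 1 :=
            mul_le_mul_of_nonneg_left (hwp k) (hbr k)
        _ = bc k * r^k := mul_one _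
    calc ‖term p w‖ = (‖a p.1‖ * ‖w‖^p.1) * (‖a p.2‖ * ‖w‖^p.2) := by
          rw [hterm]
          simp [norm_mul, RCLike.norm_conj, norm_pow]
      _ ≤ G p := by
          rw [hG]
          exact mul_le_mul (key p.1) (key p.2)
            (mul_nonneg (norm_nonneg _) (by positivity)) (hbr p.1)
  have hlint : ∀ p : ℕ × ℕ, (∫⁻ w, ‖term p w‖₊ ∂(nVol.restrict unitDisk))
      ≤ ENNReal.ofReal (G p) := by
    intro p
    have hb : ∀ᵐ w ∂(nVol.restrict unitDisk), (‖term p w‖₊ : ℝ≥0∞) ≤ ENNReal.ofReal (G p) := by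
      filter_upwards [ae_restrict_mem hmUD] with w hw
      rw [← enorm_eq_nnnorm, ← ofReal_norm]
      exact ENNReal.ofReal_le_ofReal (htermbd p w hw)
    calc (∫⁻ w, ‖term p w‖₊ ∂(nVol.restrict unitDisk))
        ≤ ∫⁻ _, ENNReal.ofReal (G p) ∂(nVol.restrict unitDisk) := lintegral_mono_ae hb
      _ = ENNReal.ofReal (G p) := by
          rw [lintegral_const, Measure.restrict_apply_univ, nVol_disk, mul_one]
  have hne : ∑' p : ℕ×ℕ, (∫⁻ w, ‖term p w‖₊ ∂(nVol.restrict unitDisk)) ≠ ⊤ := by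
    refine ne_top_of_le_ne_top ?_ (ENNReal.tsum_le_tsum hlint)
    rw [← ENNReal.ofReal_tsum_of_nonneg hGnn hGsum]
    exact ENNReal.ofReal_ne_top
  have hmeas : ∀ p : ℕ×ℕ, AEStronglyMeasurable (term p) (nVol.restrict unitDisk) := by
    intro p
    apply Continuous.aestronglyMeasurable
    exact (continuous_const.mul (continuous_pow p.1)).mul
      (Complex.continuous_conj.comp (continuous_const.mul (continuous_pow p.2)))
  have hint : (∫ w in unitDisk, ((g w : ℝ):ℂ) ∂nVol)
      = ∑' p : ℕ×ℕ, ∫ w in unitDisk, term p w ∂nVol := by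
    rw [← integral_tsum hmeas hne]
    exact setIntegral_congr_fun hmUD (fun w hw => (hpt w hw).symm)
  have hterm_int : ∀ p : ℕ×ℕ, (∫ w in unitDisk, term p w ∂nVol)
      = (a p.1 * (starRingEnd ℂ) (a p.2))
        * (if p.1 = p.2 then ((1/((p.1:ℝ)+1) : ℝ):ℂ) else 0) := by
    intro p
    have hrw : term p = fun w =>
        (a p.1 * (starRingEnd ℂ) (a p.2)) * (w^p.1 * (starRingEnd ℂ) w^p.2) := by
      funext w
      rw [hterm]
      simp only [map_mul, map_pow]
      ring
    rw [hrw, integral_const_mul, integral_monomial_nVol]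
  set F : ℕ×ℕ → ℝ :=
    fun p => if p.1 = p.2 then bc p.1^2 * r^(2*p.1) * (1/((p.1:ℝ)+1)) else 0 with hF
  have hFterm : ∀ p : ℕ×ℕ, (∫ w in unitDisk, term p w ∂nVol) = ((F p : ℝ) : ℂ) := by
    rintro ⟨i, j⟩
    rw [hterm_int ⟨i, j⟩]
    simp only [hF]
    by_cases h : i = j
    · subst h
      rw [if_pos rfl, if_pos rfl, Complex.mul_conj, Complex.normSq_eq_norm_sq,
        hanorm]
      rw [show bc i^2 * r^(2*i) * (1/((i:ℝ)+1)) = (bc i * r^i)^2 * (1/((i:ℝ)+1)) from by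
        rw [mul_pow, ← pow_mul, mul_comm 2 i]]
      push_cast
      ring
    · rw [if_neg h, if_neg h, mul_zero]
      simp
  have hFleG : ∀ p : ℕ×ℕ, 0 ≤ F p ∧ F p ≤ G p := by
    rintro ⟨i, j⟩
    simp only [hF, hG]
    by_cases h : i = j
    · subst h
      rw [if_pos rfl]
      have hb := bc_pos i
      constructor
      · positivity
      · have h1 : bc i^2 * r^(2*i) * (1/((i:ℝ)+1)) ≤ bc i^2 * r^(2*i) * 1 := by
          apply mul_le_mul_of_nonneg_left _ (by positivity)
          rw [div_le_one (by positivity)]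
          linarith [Nat.cast_nonneg (α := ℝ) i]
        refine h1.trans (le_of_eq ?_)
        rw [mul_one, mul_comm 2 i, pow_mul]
        ring
    · rw [if_neg h]
      exact ⟨le_refl 0, mul_nonneg (hbr i) (hbr j)⟩
  have hFsum : Summable F :=
    Summable.of_nonneg_of_le (fun p => (hFleG p).1) (fun p => (hFleG p).2) hGsum
  have hdiag : ∑' p : ℕ×ℕ, F p = ∑' n : ℕ, bc n^2 * r^(2*n) * (1/((n:ℝ)+1)) := by
    have hfib : ∀ n : ℕ, Summable (fun m => F (n, m)) := by
      intro n
      apply summable_of_ne_finset_zero (s := {n})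
      intro m hm
      simp only [hF]
      exact if_neg (fun h => hm (by simp [h.symm]))
    rw [Summable.tsum_prod' hFsum hfib]
    refine tsum_congr fun n => ?_
    rw [tsum_eq_single n (fun m hm => ?_)]
    · simp [hF]
    · simp only [hF]
      exact if_neg (fun h => hm h.symm)
  have h1 : ((∫ w in unitDisk, g w ∂nVol : ℝ) : ℂ)
      = ∑' p : ℕ×ℕ, ∫ w in unitDisk, term p w ∂nVol := by
    rw [← hint]
    exact (integral_ofReal).symm
  have h2 : (∑' p : ℕ×ℕ, ∫ w in unitDisk, term p w ∂nVol)
      = ((∑' n:ℕ, bc n^2*r^(2*n)*(1/((n:ℝ)+1)) : ℝ):ℂ) := by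
    calc (∑' p : ℕ×ℕ, ∫ w in unitDisk, term p w ∂nVol)
        = ∑' p : ℕ×ℕ, ((F p : ℝ):ℂ) := tsum_congr hFterm
      _ = ((∑' p : ℕ×ℕ, F p : ℝ):ℂ) := (Complex.ofReal_tsum F).symm
      _ = _ := by rw [hdiag]
  have hval : (∫ w in unitDisk, g w ∂nVol) = ∑' n:ℕ, bc n^2*r^(2*n)*(1/((n:ℝ)+1)) :=
    Complex.ofReal_injective (h1.trans h2)
  rw [hval]
  have hr2 : r^2 < 1 := by nlinarith
  have hr2' : (0:ℝ) ≤ r^2 := sq_nonneg r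
  have hsumR : Summable (fun n : ℕ => 2 * (r^2)^n) :=
    (summable_geometric_of_lt_one hr2' hr2).mul_left 2
  have hle : ∀ n:ℕ, bc n^2*r^(2*n)*(1/((n:ℝ)+1)) ≤ 2*(r^2)^n := by
    intro n
    have h2 : r^(2*n) = (r^2)^n := by rw [pow_mul]
    rw [h2]
    have hp : (0:ℝ) ≤ (r^2)^n := pow_nonneg hr2' n
    have hkey : bc n^2 * (1/((n:ℝ)+1)) ≤ 2 := by
      rw [mul_one_div, div_le_iff₀ (by positivity)]
      nlinarith [bc_sq_le n]
    calc bc n^2 * (r^2)^n * (1/((n:ℝ)+1))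
        = (bc n^2 * (1/((n:ℝ)+1))) * (r^2)^n := by ring
      _ ≤ 2 * (r^2)^n := mul_le_mul_of_nonneg_right hkey hp
  have hsumL : Summable (fun n:ℕ => bc n^2*r^(2*n)*(1/((n:ℝ)+1))) :=
    Summable.of_nonneg_of_le (fun n => by positivity) hle hsumR
  calc (∑' n:ℕ, bc n^2*r^(2*n)*(1/((n:ℝ)+1))) ≤ ∑' n:ℕ, 2*(r^2)^n :=
        Summable.tsum_le_tsum hle hsumL hsumR
    _ = 2 * (1-r^2)⁻¹ := by rw [tsum_mul_left, tsum_geometric_of_lt_one hr2' hr2]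
    _ = 2/(1-r^2) := by rw [div_eq_mul_inv]

lemma denom_lb {v : ℂ} {s : ℝ} (hv : ‖v‖ ≤ s) (hs : s ≤ 1) : 1 - s ≤ ‖(1:ℂ) - v‖ := by
  calc 1 - s ≤ 1 - ‖v‖ := by linarith
    _ = ‖(1:ℂ)‖ - ‖v‖ := by rw [norm_one]
    _ ≤ ‖(1:ℂ) - v‖ := norm_sub_norm_le 1 v

set_option maxHeartbeats 1000000 in
lemma Iphi_hasDerivAt (φ f : ℂ → ℂ) (hφm : Measurable φ)
    (hmaps : Set.MapsTo φ unitDisk unitDisk) (hf : Measurable f)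
    {B : ℝ} (hB : ∀ w ∈ unitDisk, ‖f w‖ ≤ B) {z₀ : ℂ} (hz₀ : ‖z₀‖ < 1) :
    HasDerivAt (Iphi φ f)
      (∫ w in unitDisk,
        f w * (2 * (starRingEnd ℂ) (φ w)) / (1 - z₀ * (starRingEnd ℂ) (φ w))^3 ∂nVol) z₀ := by
  have hmUD : MeasurableSet unitDisk := by exact measurableSet_ball
  have hB0 : 0 ≤ B := le_trans (norm_nonneg (f 0)) (hB 0 (by simp [mem_unitDisk]))
  set ρ : ℝ := (1 + ‖z₀‖)/2 with hρ
  set ε : ℝ := (1 - ‖z₀‖)/2 with hε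
  have hε0 : 0 < ε := by rw [hε]; linarith
  have hρ1 : ρ < 1 := by rw [hρ]; linarith
  have hρ0 : ‖z₀‖ ≤ ρ := by rw [hρ]; linarith
  have h1ρ : 0 < 1 - ρ := by linarith
  set c : ℂ → ℂ := fun w => (starRingEnd ℂ) (φ w) with hc
  have hcm : Measurable c := Complex.continuous_conj.measurable.comp hφm
  have hcnorm : ∀ w ∈ unitDisk, ‖c w‖ ≤ 1 := fun w hw => by
    rw [hc]
    simp only [RCLike.norm_conj]
    exact (mem_unitDisk.mp (hmaps hw)).le
  have hden : ∀ x : ℂ, ‖x‖ ≤ ρ → ∀ w ∈ unitDisk, 1 - ρ ≤ ‖(1:ℂ) - x * c w‖ := by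
    intro x hx w hw
    refine denom_lb ?_ hρ1.le
    rw [norm_mul]
    calc ‖x‖ * ‖c w‖ ≤ ρ * 1 :=
          mul_le_mul hx (hcnorm w hw) (norm_nonneg _) (le_trans (norm_nonneg z₀) hρ0)
      _ = ρ := mul_one ρ
  have hballρ : ∀ x ∈ Metric.ball z₀ ε, ‖x‖ ≤ ρ := by
    intro x hx
    have := mem_ball_iff_norm.mp hx
    calc ‖x‖ = ‖x - z₀ + z₀‖ := by ring_nf
      _ ≤ ‖x - z₀‖ + ‖z₀‖ := norm_add_le _ _
      _ ≤ ρ := by rw [hρ]; rw [hε] at this; linarith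
  set F : ℂ → ℂ → ℂ := fun x w => f w / (1 - x * c w)^2 with hF
  set F' : ℂ → ℂ → ℂ := fun x w => f w * (2 * c w) / (1 - x * c w)^3 with hF'
  have hFmeas : ∀ x : ℂ, AEStronglyMeasurable (F x) (nVol.restrict unitDisk) := by
    intro x
    exact (hf.div (((measurable_const.sub (measurable_const.mul hcm)).pow_const 2))).aestronglyMeasurable
  have hF'meas : AEStronglyMeasurable (F' z₀) (nVol.restrict unitDisk) := by
    exact ((hf.mul (measurable_const.mul hcm)).div
      (((measurable_const.sub (measurable_const.mul hcm)).pow_const 3))).aestronglyMeasurable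
  have hFint : Integrable (F z₀) (nVol.restrict unitDisk) := by
    refine Integrable.mono' (integrable_const (B / (1-ρ)^2)) (hFmeas z₀) ?_
    filter_upwards [ae_restrict_mem hmUD] with w hw
    rw [hF]
    simp only [norm_div, norm_pow]
    refine div_le_div₀ hB0 (hB w hw) (by positivity) ?_
    exact pow_le_pow_left₀ h1ρ.le (hden z₀ hρ0 w hw) 2
  have h_bound : ∀ᵐ w ∂(nVol.restrict unitDisk), ∀ x ∈ Metric.ball z₀ ε,
      ‖F' x w‖ ≤ 2 * B / (1-ρ)^3 := by
    filter_upwards [ae_restrict_mem hmUD] with w hw x hx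
    rw [hF']
    simp only [norm_div, norm_pow, norm_mul]
    have h2 : ‖(2:ℂ)‖ = 2 := by norm_num
    have hnum : ‖f w‖ * (‖(2:ℂ)‖ * ‖c w‖) ≤ 2 * B := by
      calc ‖f w‖ * (‖(2:ℂ)‖ * ‖c w‖) ≤ B * (2 * 1) := by
            rw [h2]
            exact mul_le_mul (hB w hw)
              (mul_le_mul_of_nonneg_left (hcnorm w hw) (by norm_num)) (by positivity) hB0
        _ = 2 * B := by ring
    refine div_le_div₀ (by positivity) hnum (by positivity) ?_
    exact pow_le_pow_left₀ h1ρ.le (hden x (hballρ x hx) w hw) 3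
  have bound_int : Integrable (fun _ : ℂ => 2 * B / (1-ρ)^3) (nVol.restrict unitDisk) :=
    integrable_const _
  have h_diff : ∀ᵐ w ∂(nVol.restrict unitDisk), ∀ x ∈ Metric.ball z₀ ε,
      HasDerivAt (fun x => F x w) (F' x w) x := by
    filter_upwards [ae_restrict_mem hmUD] with w hw x hx
    have hd0 : (1:ℂ) - x * c w ≠ 0 := by
      intro h0
      have := hden x (hballρ x hx) w hw
      rw [h0, norm_zero] at this
      linarith
    have hd1 : HasDerivAt (fun x : ℂ => (1:ℂ) - x * c w) (-(c w)) x := by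
      simpa using ((hasDerivAt_id x).mul_const (c w)).const_sub 1
    have hd2 : HasDerivAt (fun x : ℂ => ((1:ℂ) - x * c w)^2)
        (2 * ((1:ℂ) - x * c w) ^ 1 * -(c w)) x := by
      simpa using hd1.fun_pow 2
    have hd3 : HasDerivAt (fun x : ℂ => (((1:ℂ) - x * c w)^2)⁻¹)
        (-(2 * ((1:ℂ) - x * c w) ^ 1 * -(c w)) / (((1:ℂ) - x * c w)^2)^2) x :=
      hd2.inv (pow_ne_zero 2 hd0)
    have hd4 := hd3.const_mul (f w)
    have heq : f w * (-(2 * ((1:ℂ) - x * c w) ^ 1 * -(c w)) / (((1:ℂ) - x * c w)^2)^2)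
        = F' x w := by
      rw [hF']
      simp only
      field_simp
    have heqf : (fun x : ℂ => f w * (((1:ℂ) - x * c w)^2)⁻¹) = fun x => F x w := by
      funext y
      rw [hF]
      simp only [div_eq_mul_inv]
    rw [heq, heqf] at hd4
    exact hd4
  have key := hasDerivAt_integral_of_dominated_loc_of_deriv_le (Metric.ball_mem_nhds z₀ hε0)
    (Filter.Eventually.of_forall hFmeas) hFint hF'meas h_bound bound_int h_diff
  exact key.2

set_option maxHeartbeats 1000000 in
/-- If `C_φ : L³_a(D) → L³(D)` is bounded, then for every bounded measurable `f` on `D`,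
`I_φ f` is holomorphic on `D` and lies in the Bloch space with `‖I_φ f‖_β ≤ C‖f‖_∞`,
where `C` depends only on the norm of `C_φ`. -/
theorem stmt15 (φ : ℂ → ℂ) (hφm : Measurable φ) (hmaps : Set.MapsTo φ unitDisk unitDisk)
    (N : ℝ) (hN : 0 ≤ N)
    (hbound : ∀ g : ℂ → ℂ, DifferentiableOn ℂ g unitDisk →
      IntegrableOn (fun w => ‖g w‖ ^ 3) unitDisk nVol →
      (∫ w in unitDisk, ‖g (φ w)‖ ^ 3 ∂nVol) ≤ N ^ 3 * ∫ w in unitDisk, ‖g w‖ ^ 3 ∂nVol) :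
    ∃ C > (0:ℝ), ∀ f : ℂ → ℂ, Measurable f → ∀ B : ℝ, (∀ w ∈ unitDisk, ‖f w‖ ≤ B) →
      DifferentiableOn ℂ (Iphi φ f) unitDisk ∧
      ∀ z ∈ unitDisk, (1 - ‖z‖ ^ 2) * ‖deriv (Iphi φ f) z‖ ≤ C * B := by

  have hmUD : MeasurableSet unitDisk := by exact measurableSet_ball
  refine ⟨4*N^3+1, by positivity, ?_⟩
  intro f hf B hB
  have hB0 : 0 ≤ B := le_trans (norm_nonneg (f 0)) (hB 0 (by simp [mem_unitDisk]))
  have hdiff : ∀ z ∈ unitDisk, HasDerivAt (Iphi φ f)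
      (∫ w in unitDisk,
        f w * (2 * (starRingEnd ℂ) (φ w)) / (1 - z * (starRingEnd ℂ) (φ w))^3 ∂nVol) z :=
    fun z hz => Iphi_hasDerivAt φ f hφm hmaps hf hB (mem_unitDisk.mp hz)
  refine ⟨fun z hz => (hdiff z hz).differentiableAt.differentiableWithinAt, ?_⟩
  intro z hz
  have hz1 : ‖z‖ < 1 := mem_unitDisk.mp hz
  have h1r : (0:ℝ) < 1 - ‖z‖ := by linarith
  have h1r2 : (0:ℝ) < 1 - ‖z‖^2 := by nlinarith [norm_nonneg z]
  rw [(hdiff z hz).deriv]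
  set gz : ℂ → ℂ := fun u => ((1:ℂ) - (starRingEnd ℂ) z * u)⁻¹ with hgz
  have hnorm_eq : ∀ u : ℂ, ‖(1:ℂ) - z * (starRingEnd ℂ) u‖ = ‖(1:ℂ) - (starRingEnd ℂ) z * u‖ := by
    intro u
    rw [← RCLike.norm_conj ((1:ℂ) - (starRingEnd ℂ) z * u)]
    congr 1
    rw [map_sub, map_mul, map_one, Complex.conj_conj]
  have hgz_norm : ∀ u : ℂ, ‖u‖ ≤ 1 → ‖gz u‖ ≤ (1 - ‖z‖)⁻¹ := by
    intro u hu
    rw [hgz]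
    simp only [norm_inv]
    have hd : 1 - ‖z‖ ≤ ‖(1:ℂ) - (starRingEnd ℂ) z * u‖ := by
      refine denom_lb ?_ hz1.le
      rw [norm_mul, RCLike.norm_conj]
      calc ‖z‖ * ‖u‖ ≤ ‖z‖ * 1 := mul_le_mul_of_nonneg_left hu (norm_nonneg z)
        _ = ‖z‖ := mul_one _
    exact inv_anti₀ h1r hd
  have hgz_meas : Measurable gz :=
    ((measurable_const.sub (measurable_const.mul measurable_id)).inv)
  -- integrability of ‖gz ∘ φ‖³ and ‖gz‖³ on the disk
  have hint1 : IntegrableOn (fun w => ‖gz (φ w)‖^3) unitDisk nVol := by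
    refine Integrable.mono' (integrable_const (((1 - ‖z‖)⁻¹)^3))
      ((hgz_meas.comp hφm).norm.pow_const 3).aestronglyMeasurable ?_
    filter_upwards [ae_restrict_mem hmUD] with w hw
    rw [Real.norm_eq_abs, _root_.abs_of_nonneg (by positivity)]
    exact pow_le_pow_left₀ (norm_nonneg _) (hgz_norm (φ w) (mem_unitDisk.mp (hmaps hw)).le) 3
  have hint2 : IntegrableOn (fun w => ‖gz w‖^3) unitDisk nVol := by
    refine Integrable.mono' (integrable_const (((1 - ‖z‖)⁻¹)^3))
      (hgz_meas.norm.pow_const 3).aestronglyMeasurable ?_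
    filter_upwards [ae_restrict_mem hmUD] with w hw
    rw [Real.norm_eq_abs, _root_.abs_of_nonneg (by positivity)]
    exact pow_le_pow_left₀ (norm_nonneg _) (hgz_norm w (mem_unitDisk.mp hw).le) 3
  have hdiffOn : DifferentiableOn ℂ gz unitDisk := by
    rw [hgz]
    refine DifferentiableOn.inv ?_ ?_
    · exact ((differentiable_const _).sub ((differentiable_const _).mul differentiable_id)).differentiableOn
    · intro u hu h0
      have hlt : ‖(starRingEnd ℂ) z * u‖ < 1 := by
        rw [norm_mul, RCLike.norm_conj]
        calc ‖z‖ * ‖u‖ ≤ 1 * ‖u‖ := mul_le_mul_of_nonneg_right hz1.le (norm_nonneg u)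
          _ = ‖u‖ := one_mul _
          _ < 1 := mem_unitDisk.mp hu
      have h2 := denom_lb (le_refl ‖(starRingEnd ℂ) z * u‖) hlt.le
      rw [h0, norm_zero] at h2
      linarith
  -- step 1 : norm of the integral bounded by the integral of 2B‖gz(φ w)‖³
  have step1 : ‖∫ w in unitDisk,
      f w * (2 * (starRingEnd ℂ) (φ w)) / (1 - z * (starRingEnd ℂ) (φ w))^3 ∂nVol‖
      ≤ ∫ w in unitDisk, 2*B*‖gz (φ w)‖^3 ∂nVol := by
    refine norm_integral_le_of_norm_le ((hint1.const_mul (2*B)) : Integrable _ _) ?_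
    filter_upwards [ae_restrict_mem hmUD] with w hw
    rw [norm_div, norm_mul, norm_mul, norm_pow]
    have h2 : ‖(2:ℂ)‖ = 2 := by norm_num
    have hφw : ‖(starRingEnd ℂ) (φ w)‖ ≤ 1 := by
      rw [RCLike.norm_conj]; exact (mem_unitDisk.mp (hmaps hw)).le
    have hnum : ‖f w‖ * (‖(2:ℂ)‖ * ‖(starRingEnd ℂ) (φ w)‖) ≤ 2*B := by
      calc ‖f w‖ * (‖(2:ℂ)‖ * ‖(starRingEnd ℂ) (φ w)‖) ≤ B * (2 * 1) := by
            rw [h2]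
            exact mul_le_mul (hB w hw) (mul_le_mul_of_nonneg_left hφw (by norm_num))
              (by positivity) hB0
        _ = 2*B := by ring
    have hdenpos : 0 < ‖(1:ℂ) - z * (starRingEnd ℂ) (φ w)‖ := by
      have hle : ‖z * (starRingEnd ℂ) (φ w)‖ ≤ ‖z‖ := by
        rw [norm_mul, RCLike.norm_conj]
        calc ‖z‖ * ‖φ w‖ ≤ ‖z‖ * 1 :=
              mul_le_mul_of_nonneg_left (mem_unitDisk.mp (hmaps hw)).le (norm_nonneg z)
          _ = ‖z‖ := mul_one _
      have h2 := denom_lb hle hz1.le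
      linarith
    have hgzval : ‖gz (φ w)‖ = ‖(1:ℂ) - z * (starRingEnd ℂ) (φ w)‖⁻¹ := by
      rw [hgz]
      simp only [norm_inv]
      rw [hnorm_eq (φ w)]
    rw [div_le_iff₀ (by positivity), hgzval]
    calc ‖f w‖ * (‖(2:ℂ)‖ * ‖(starRingEnd ℂ) (φ w)‖)
        ≤ 2*B := hnum
      _ = 2*B*(‖(1:ℂ) - z * (starRingEnd ℂ) (φ w)‖⁻¹^3 * ‖(1:ℂ) - z * (starRingEnd ℂ) (φ w)‖^3) := by
          rw [← mul_pow, inv_mul_cancel₀ hdenpos.ne', one_pow, mul_one]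
      _ = 2*B*‖(1:ℂ) - z * (starRingEnd ℂ) (φ w)‖⁻¹^3 * ‖(1:ℂ) - z * (starRingEnd ℂ) (φ w)‖^3 := by
          ring
  have step2 : (∫ w in unitDisk, 2*B*‖gz (φ w)‖^3 ∂nVol)
      = 2*B * ∫ w in unitDisk, ‖gz (φ w)‖^3 ∂nVol := integral_const_mul _ _
  have step3 : (∫ w in unitDisk, ‖gz (φ w)‖^3 ∂nVol) ≤ N^3 * ∫ w in unitDisk, ‖gz w‖^3 ∂nVol :=
    hbound gz hdiffOn hint2
  have step4 : (∫ w in unitDisk, ‖gz w‖^3 ∂nVol) ≤ 2 / (1 - ‖z‖^2) := by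
    have : ∀ w : ℂ, ‖gz w‖^3 = ‖(1:ℂ) - (starRingEnd ℂ) z * w‖⁻¹ ^ 3 := fun w => by
      rw [hgz]; simp [norm_inv]
    simp_rw [this]
    exact bergman hz1
  have hfinal : ‖∫ w in unitDisk,
      f w * (2 * (starRingEnd ℂ) (φ w)) / (1 - z * (starRingEnd ℂ) (φ w))^3 ∂nVol‖
      ≤ 2*B * (N^3 * (2 / (1 - ‖z‖^2))) := by
    refine step1.trans ?_
    rw [step2]
    refine mul_le_mul_of_nonneg_left (step3.trans ?_) (by positivity)
    exact mul_le_mul_of_nonneg_left step4 (by positivity)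
  calc (1 - ‖z‖ ^ 2) * ‖∫ w in unitDisk,
        f w * (2 * (starRingEnd ℂ) (φ w)) / (1 - z * (starRingEnd ℂ) (φ w))^3 ∂nVol‖
      ≤ (1 - ‖z‖ ^ 2) * (2*B * (N^3 * (2 / (1 - ‖z‖^2)))) :=
        mul_le_mul_of_nonneg_left hfinal h1r2.le
    _ = 4*N^3*B*((1 - ‖z‖^2) * (1 - ‖z‖^2)⁻¹) := by
        rw [div_eq_mul_inv]; ring
    _ = 4*N^3*B := by rw [mul_inv_cancel₀ h1r2.ne', mul_one]
    _ ≤ (4*N^3+1) * B := by nlinarith
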